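/- arXiv:1012.1239 — 2 statements merged into one kernel-verified Lean document; each statement's English description precedes it below -/
import Mathlib

section
/- Let u : [0,∞) → ℝ be a bounded function which is twice continuously differentiable on (0,∞), with u, u', u'' extending continuously to 0, and suppose u(0) = 0 and a·u''(0) + b·u'(0) = 0 where a > 0 and b ∈ ℝ. Define F(x) = -x + (b/a)x² for x < 0 and the extension E₀u by (E₀u)(x) = u(x) for x ≥ 0 and (E₀u)(x) = -u(F(x)) for -ε < x < 0, where ε > 0 is small enough that F(x) > 0 on (-ε,0). Then E₀u is twice continuously differentiable on (-ε,∞). -/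
open Set Filter

theorem aux_glue_hasDerivAt {f : ℝ → ℝ} {L ε : ℝ} (hε : 0 < ε)
    (hfr : DifferentiableOn ℝ f (Ioi 0))
    (hcr : ContinuousWithinAt f (Ioi 0) 0)
    (hdr : Tendsto (deriv f) (nhdsWithin 0 (Ioi 0)) (nhds L))
    (hfl : DifferentiableOn ℝ f (Ioo (-ε) 0))
    (hcl : ContinuousWithinAt f (Ioo (-ε) 0) 0)
    (hdl : Tendsto (deriv f) (nhdsWithin 0 (Iio 0)) (nhds L)) :
    HasDerivAt f L 0 := by
  have h1 : HasDerivWithinAt f L (Ici 0) 0 :=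
    hasDerivWithinAt_Ici_of_tendsto_deriv hfr hcr self_mem_nhdsWithin hdr
  have h2 : HasDerivWithinAt f L (Iic 0) 0 :=
    hasDerivWithinAt_Iic_of_tendsto_deriv hfl hcl
      (Ioo_mem_nhdsLT_of_mem ⟨by linarith, le_refl _⟩) hdl
  have h3 := h2.union h1
  rw [Iic_union_Ici] at h3
  rw [hasDerivWithinAt_univ] at h3; exact h3

/-- Squeezed odd reflection of a bounded C² function on the half-line with
boundary condition `u 0 = 0` and `a·u''(0) + b·u'(0) = 0` is C² on `(-ε, ∞)`. -/
theorem stmt_0 (a b : ℝ) (ha : 0 < a) (u : ℝ → ℝ)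
    (hbdd : ∃ M : ℝ, ∀ x : ℝ, 0 ≤ x → |u x| ≤ M)
    (hu : ContDiffOn ℝ 2 u (Ioi 0))
    (u1 u2 : ℝ)
    (hcont0 : Tendsto u (nhdsWithin 0 (Ioi 0)) (nhds (u 0)))
    (hder1 : Tendsto (deriv u) (nhdsWithin 0 (Ioi 0)) (nhds u1))
    (hder2 : Tendsto (deriv (deriv u)) (nhdsWithin 0 (Ioi 0)) (nhds u2))
    (hu0 : u 0 = 0)
    (hbc : a * u2 + b * u1 = 0)
    (ε : ℝ) (hε : 0 < ε)
    (hF : ∀ x ∈ Ioo (-ε) (0 : ℝ), 0 < -x + (b / a) * x ^ 2) :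
    ContDiffOn ℝ 2
      (fun x : ℝ => if 0 ≤ x then u x else -u (-x + (b / a) * x ^ 2))
      (Ioi (-ε)) := by
  set c : ℝ := b / a with hc
  set F : ℝ → ℝ := fun x => -x + c * x ^ 2 with hFdef
  set Fd : ℝ → ℝ := fun x => -1 + 2 * c * x with hFddef
  set E : ℝ → ℝ := fun x => if 0 ≤ x then u x else -u (F x) with hEdef
  set v : ℝ → ℝ := deriv u with hvdef
  set w : ℝ → ℝ := deriv v with hwdef
  set V : ℝ → ℝ := fun x => if 0 ≤ x then (if x = 0 then u1 else v x)
      else -(v (F x) * Fd x) with hVdef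
  set W : ℝ → ℝ := fun x => if 0 ≤ x then (if x = 0 then u2 else w x)
      else -(w (F x) * Fd x * Fd x + v (F x) * (2 * c)) with hWdef
  rw [hu0] at hcont0
  suffices h : ContDiffOn ℝ 2 E (Ioi (-ε)) by
    rw [hEdef, hFdef] at h
    simpa using h
  -- basic facts about u
  have hu' : ContDiffOn ℝ 1 v (Ioi 0) := by
    rw [show (2 : WithTop ℕ∞) = 1 + 1 from rfl,
      contDiffOn_succ_iff_deriv_of_isOpen isOpen_Ioi] at hu
    exact hu.2.2
  have huIoi : ∀ x ∈ Ioi (0:ℝ), HasDerivAt u (v x) x := fun x hx =>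
    ((hu.differentiableOn (by norm_num)).differentiableAt
      (isOpen_Ioi.mem_nhds hx)).hasDerivAt
  have hvIoi : ∀ x ∈ Ioi (0:ℝ), HasDerivAt v (w x) x := fun x hx =>
    ((hu'.differentiableOn (by norm_num)).differentiableAt
      (isOpen_Ioi.mem_nhds hx)).hasDerivAt
  have hwcont : ContinuousOn w (Ioi 0) := by
    rw [show (1 : WithTop ℕ∞) = 0 + 1 from rfl,
      contDiffOn_succ_iff_deriv_of_isOpen isOpen_Ioi] at hu'
    exact contDiffOn_zero.1 hu'.2.2
  -- facts about F
  have hFpos : ∀ x ∈ Ioo (-ε) (0:ℝ), F x ∈ Ioi (0:ℝ) := fun x hx => hF x hx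
  have hFcont : Continuous F := by rw [hFdef]; continuity
  have hFdcont : Continuous Fd := by rw [hFddef]; continuity
  have hFder : ∀ x : ℝ, HasDerivAt F (Fd x) x := by
    intro x
    have h2 : HasDerivAt (fun y : ℝ => -y + c * y ^ 2) (-1 + c * (↑2 * x ^ 1)) x :=
      ((hasDerivAt_id x).neg).add ((hasDerivAt_pow 2 x).const_mul c)
    have h3 : (-1 + c * (↑2 * x ^ 1) : ℝ) = Fd x := by rw [hFddef]; push_cast; ring
    rw [h3] at h2
    exact h2
  have hFdder : ∀ x : ℝ, HasDerivAt Fd (2 * c) x := by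
    intro x
    have h2 : HasDerivAt (fun y : ℝ => -1 + 2 * c * y) (0 + 2 * c * 1) x :=
      (hasDerivAt_const x (-1:ℝ)).add ((hasDerivAt_id x).const_mul (2*c))
    rw [hFddef]; simpa using h2
  have h0Ioc : (0:ℝ) ∈ Ioc (-ε) (0:ℝ) := ⟨by linarith, le_refl _⟩
  have hIooMem : Ioo (-ε) (0:ℝ) ∈ nhdsWithin (0:ℝ) (Iio 0) := Ioo_mem_nhdsLT_of_mem h0Ioc
  have hmono : nhdsWithin (0:ℝ) (Ioo (-ε) 0) ≤ nhdsWithin (0:ℝ) (Iio 0) :=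
    nhdsWithin_mono 0 Ioo_subset_Iio_self
  have hFt : Tendsto F (nhdsWithin (0:ℝ) (Iio 0)) (nhdsWithin (0:ℝ) (Ioi 0)) := by
    apply tendsto_nhdsWithin_of_tendsto_nhds_of_eventually_within
    · have h1 := hFcont.tendsto 0
      have h0 : F 0 = 0 := by rw [hFdef]; simp
      rw [h0] at h1
      exact h1.mono_left nhdsWithin_le_nhds
    · filter_upwards [hIooMem] with y hy using hFpos y hy
  have hFdt : Tendsto Fd (nhdsWithin (0:ℝ) (Iio 0)) (nhds (-1:ℝ)) := by
    have h1 := hFdcont.tendsto 0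
    have h0 : Fd 0 = -1 := by rw [hFddef]; simp
    rw [h0] at h1
    exact h1.mono_left nhdsWithin_le_nhds
  have hvFt : Tendsto (fun y => v (F y)) (nhdsWithin (0:ℝ) (Iio 0)) (nhds u1) :=
    hder1.comp hFt
  have hwFt : Tendsto (fun y => w (F y)) (nhdsWithin (0:ℝ) (Iio 0)) (nhds u2) :=
    hder2.comp hFt
  have huFt : Tendsto (fun y => u (F y)) (nhdsWithin (0:ℝ) (Iio 0)) (nhds 0) := by
    exact hcont0.comp hFt
  -- derivative of E on the right
  have hEright : ∀ x ∈ Ioi (0:ℝ), HasDerivAt E (V x) x := by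
    intro x hx
    have hx' : (0:ℝ) < x := hx
    have heq : E =ᶠ[nhds x] u := by
      filter_upwards [isOpen_Ioi.mem_nhds hx] with y hy
      rw [hEdef]; simp [le_of_lt (show (0:ℝ) < y from hy)]
    have hVx : V x = v x := by rw [hVdef]; simp [hx'.le, hx'.ne']
    rw [hVx]
    exact heq.hasDerivAt_iff.2 (huIoi x hx)
  -- derivative of E on the left
  have hEleft : ∀ x ∈ Ioo (-ε) (0:ℝ), HasDerivAt E (V x) x := by
    intro x hx
    have hxneg : x < 0 := hx.2
    have hFx : F x ∈ Ioi (0:ℝ) := hFpos x hx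
    have hcomp : HasDerivAt (fun y => -u (F y)) (-(v (F x) * Fd x)) x := by
      have h2 := ((huIoi _ hFx).comp x (hFder x)).neg
      exact h2
    have heq : E =ᶠ[nhds x] fun y => -u (F y) := by
      filter_upwards [isOpen_Iio.mem_nhds hxneg] with y hy
      rw [hEdef]; simp [not_le.2 (show y < 0 from hy)]
    have hVx : V x = -(v (F x) * Fd x) := by rw [hVdef]; simp [not_le.2 hxneg]
    rw [hVx]
    exact heq.hasDerivAt_iff.2 hcomp
  have hE0v : E 0 = 0 := by rw [hEdef]; simp [hu0]
  have hV0v : V 0 = u1 := by rw [hVdef]; simp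
  have hW0v : W 0 = u2 := by rw [hWdef]; simp
  -- limit of V-formula from the left
  have hlim1 : Tendsto (fun y => -(v (F y) * Fd y)) (nhdsWithin (0:ℝ) (Iio 0)) (nhds u1) := by
    have h := (hvFt.mul hFdt).neg
    simpa using h
  have hlim2 : Tendsto (fun y => -(w (F y) * Fd y * Fd y + v (F y) * (2 * c)))
      (nhdsWithin (0:ℝ) (Iio 0)) (nhds u2) := by
    have h := (((hwFt.mul hFdt).mul hFdt).add (hvFt.mul (tendsto_const_nhds : Tendsto (fun _ : ℝ => (2*c:ℝ)) (nhdsWithin (0:ℝ) (Iio 0)) (nhds (2*c:ℝ))))).neg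
    have e : -(u2 * (-1) * (-1) + u1 * (2 * c)) = u2 := by
      have hu2 : u2 = -(b / a) * u1 := by
        field_simp
        linarith
      rw [hu2, hc]; field_simp; ring
    rwa [e] at h
  -- derivative of E at 0
  have hE0 : HasDerivAt E (V 0) 0 := by
    rw [hV0v]
    apply aux_glue_hasDerivAt hε
    · exact fun x hx => (hEright x hx).differentiableAt.differentiableWithinAt
    · show Tendsto E (nhdsWithin 0 (Ioi 0)) (nhds (E 0))
      rw [hE0v]
      apply hcont0.congr'
      filter_upwards [self_mem_nhdsWithin] with y hy
      rw [hEdef]; simp [le_of_lt (show (0:ℝ) < y from hy)]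
    · apply hder1.congr'
      symm
      filter_upwards [self_mem_nhdsWithin] with y hy
      rw [(hEright y hy).deriv, hVdef]
      simp [le_of_lt (show (0:ℝ) < y from hy), ne_of_gt (show (0:ℝ) < y from hy)]
    · exact fun x hx => (hEleft x hx).differentiableAt.differentiableWithinAt
    · show Tendsto E (nhdsWithin 0 (Ioo (-ε) 0)) (nhds (E 0))
      rw [hE0v]
      have h := (huFt.neg).mono_left hmono
      rw [neg_zero] at h
      apply h.congr'
      filter_upwards [self_mem_nhdsWithin] with y hy
      rw [hEdef]; simp [not_le.2 hy.2]
    · apply hlim1.congr'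
      symm
      filter_upwards [hIooMem] with y hy
      rw [(hEleft y hy).deriv, hVdef]
      simp [not_le.2 hy.2]
  have hEderiv : ∀ x ∈ Ioi (-ε), HasDerivAt E (V x) x := by
    intro x hx
    rcases lt_trichotomy x 0 with h | h | h
    · exact hEleft x ⟨hx, h⟩
    · subst h; exact hE0
    · exact hEright x h
  -- derivative of V on the right
  have hVright : ∀ x ∈ Ioi (0:ℝ), HasDerivAt V (W x) x := by
    intro x hx
    have hx' : (0:ℝ) < x := hx
    have heq : V =ᶠ[nhds x] v := by
      filter_upwards [isOpen_Ioi.mem_nhds hx] with y hy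
      rw [hVdef]; simp [le_of_lt (show (0:ℝ) < y from hy), ne_of_gt (show (0:ℝ) < y from hy)]
    have hWx : W x = w x := by rw [hWdef]; simp [hx'.le, hx'.ne']
    rw [hWx]
    exact heq.hasDerivAt_iff.2 (hvIoi x hx)
  -- derivative of V on the left
  have hVleft : ∀ x ∈ Ioo (-ε) (0:ℝ), HasDerivAt V (W x) x := by
    intro x hx
    have hxneg : x < 0 := hx.2
    have hFx : F x ∈ Ioi (0:ℝ) := hFpos x hx
    have h1 : HasDerivAt (fun y => v (F y)) (w (F x) * Fd x) x := by
      have h2 := (hvIoi _ hFx).comp x (hFder x)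
      simpa [Function.comp_def] using h2
    have hcomp : HasDerivAt (fun y => -(v (F y) * Fd y))
        (-(w (F x) * Fd x * Fd x + v (F x) * (2 * c))) x := (h1.mul (hFdder x)).neg
    have heq : V =ᶠ[nhds x] fun y => -(v (F y) * Fd y) := by
      filter_upwards [isOpen_Iio.mem_nhds hxneg] with y hy
      rw [hVdef]; simp [not_le.2 (show y < 0 from hy)]
    have hWx : W x = -(w (F x) * Fd x * Fd x + v (F x) * (2 * c)) := by
      rw [hWdef]; simp [not_le.2 hxneg]
    rw [hWx]
    exact heq.hasDerivAt_iff.2 hcomp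
  -- derivative of V at 0
  have hV0 : HasDerivAt V (W 0) 0 := by
    rw [hW0v]
    apply aux_glue_hasDerivAt hε
    · exact fun x hx => (hVright x hx).differentiableAt.differentiableWithinAt
    · show Tendsto V (nhdsWithin 0 (Ioi 0)) (nhds (V 0))
      rw [hV0v]
      apply hder1.congr'
      filter_upwards [self_mem_nhdsWithin] with y hy
      rw [hVdef]; simp [le_of_lt (show (0:ℝ) < y from hy), ne_of_gt (show (0:ℝ) < y from hy)]
    · apply hder2.congr'
      symm
      filter_upwards [self_mem_nhdsWithin] with y hy
      rw [(hVright y hy).deriv, hWdef]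
      simp [le_of_lt (show (0:ℝ) < y from hy), ne_of_gt (show (0:ℝ) < y from hy)]
    · exact fun x hx => (hVleft x hx).differentiableAt.differentiableWithinAt
    · show Tendsto V (nhdsWithin 0 (Ioo (-ε) 0)) (nhds (V 0))
      rw [hV0v]
      apply (hlim1.mono_left hmono).congr'
      filter_upwards [self_mem_nhdsWithin] with y hy
      rw [hVdef]; simp [not_le.2 hy.2]
    · apply hlim2.congr'
      symm
      filter_upwards [hIooMem] with y hy
      rw [(hVleft y hy).deriv, hWdef]
      simp [not_le.2 hy.2]
  have hVderiv : ∀ x ∈ Ioi (-ε), HasDerivAt V (W x) x := by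
    intro x hx
    rcases lt_trichotomy x 0 with h | h | h
    · exact hVleft x ⟨hx, h⟩
    · subst h; exact hV0
    · exact hVright x h
  -- continuity of W
  have hWcont : ContinuousOn W (Ioi (-ε)) := by
    intro x hx
    rcases lt_trichotomy x 0 with hlt | heq0 | hgt
    · apply ContinuousAt.continuousWithinAt
      have hFx : F x ∈ Ioi (0:ℝ) := hFpos x ⟨hx, hlt⟩
      have hca : ContinuousAt (fun y => -(w (F y) * Fd y * Fd y + v (F y) * (2 * c))) x := by
        have hwF : ContinuousAt w (F x) := hwcont.continuousAt (isOpen_Ioi.mem_nhds hFx)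
        have hvF : ContinuousAt v (F x) := (hvIoi _ hFx).continuousAt
        exact ((((hwF.comp hFcont.continuousAt).mul hFdcont.continuousAt).mul
          hFdcont.continuousAt).add
          ((hvF.comp hFcont.continuousAt).mul continuousAt_const)).neg
      apply hca.congr
      filter_upwards [isOpen_Iio.mem_nhds hlt] with y hy
      rw [hWdef]; simp [not_le.2 (show y < 0 from hy)]
    · subst heq0
      have hleft : ContinuousWithinAt W (Iic 0) 0 := by
        rw [← continuousWithinAt_Iio_iff_Iic]
        show Tendsto W (nhdsWithin 0 (Iio 0)) (nhds (W 0))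
        rw [hW0v]
        apply hlim2.congr'
        symm
        filter_upwards [hIooMem] with y hy
        rw [hWdef]; simp [not_le.2 hy.2]
      have hright : ContinuousWithinAt W (Ioi 0) 0 := by
        show Tendsto W (nhdsWithin 0 (Ioi 0)) (nhds (W 0))
        rw [hW0v]
        apply hder2.congr'
        symm
        filter_upwards [self_mem_nhdsWithin] with y hy
        rw [hWdef]; simp [le_of_lt (show (0:ℝ) < y from hy), ne_of_gt (show (0:ℝ) < y from hy)]
      apply ContinuousAt.continuousWithinAt
      rw [ContinuousAt, ← nhdsLE_sup_nhdsGT (0:ℝ), tendsto_sup]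
      exact ⟨hleft, hright⟩
    · apply ContinuousAt.continuousWithinAt
      have hca : ContinuousAt w x := hwcont.continuousAt (isOpen_Ioi.mem_nhds hgt)
      apply hca.congr
      filter_upwards [isOpen_Ioi.mem_nhds hgt] with y hy
      rw [hWdef]; simp [le_of_lt (show (0:ℝ) < y from hy), ne_of_gt (show (0:ℝ) < y from hy)]
  -- assemble
  have hV1 : ContDiffOn ℝ 1 V (Ioi (-ε)) := by
    rw [show (1 : WithTop ℕ∞) = 0 + 1 from rfl,
      contDiffOn_succ_iff_deriv_of_isOpen isOpen_Ioi]
    refine ⟨fun x hx => (hVderiv x hx).differentiableAt.differentiableWithinAt, by simp, ?_⟩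
    rw [contDiffOn_zero]
    exact hWcont.congr fun x hx => (hVderiv x hx).deriv
  rw [show (2 : WithTop ℕ∞) = 1 + 1 from rfl,
    contDiffOn_succ_iff_deriv_of_isOpen isOpen_Ioi]
  exact ⟨fun x hx => (hEderiv x hx).differentiableAt.differentiableWithinAt, by simp,
    hV1.congr fun x hx => (hEderiv x hx).deriv⟩
end

section
/- Let Ω ⊆ ℝⁿ, and let V₁, …, V_M be sets with bounded linear extension maps Eᵢ sending bounded functions u : Vᵢ ∩ Ω → ℝ to functions Eᵢu : Vᵢ → ℝ with Eᵢu = u on Vᵢ ∩ Ω and sup_{Vᵢ}|Eᵢu| = sup_{Vᵢ ∩ Ω}|u|. Let η₀, …, η_M : ℝⁿ → [0,1] with support of ηᵢ contained in Vᵢ for i ≥ 1, support of η₀ contained in Ω, Σᵢ ηᵢ = 1 on Ω, and Σᵢ ηᵢ ≤ 1 everywhere. Then Eu := η₀·u + Σ_{i≥1} ηᵢ · Eᵢ(u|_{Vᵢ ∩ Ω}) (extended by 0 outside the supports) satisfies Eu = u on Ω and sup_{ℝⁿ}|Eu| = sup_{Ω}|u| for every bounded u : Ω → ℝ. -/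
open Set

/-- Gluing local contractive extensions by a partition of unity yields a global
extension with the same supremum norm. -/
theorem stmt_12 (n M : ℕ) (Ω : Set (EuclideanSpace ℝ (Fin n))) (hΩ : Ω.Nonempty)
    (V : Fin M → Set (EuclideanSpace ℝ (Fin n)))
    (u : EuclideanSpace ℝ (Fin n) → ℝ) (K : ℝ) (hu : ∀ x ∈ Ω, |u x| ≤ K)
    (f : Fin M → EuclideanSpace ℝ (Fin n) → ℝ)
    (hf_eq : ∀ i, ∀ x ∈ V i ∩ Ω, f i x = u x)
    (hf_bdd : ∀ i, ∃ Ki : ℝ, ∀ x ∈ V i, |f i x| ≤ Ki)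
    (hf_sup : ∀ i, sSup ((fun x => |f i x|) '' V i) =
      sSup ((fun x => |u x|) '' (V i ∩ Ω)))
    (η0 : EuclideanSpace ℝ (Fin n) → ℝ) (η : Fin M → EuclideanSpace ℝ (Fin n) → ℝ)
    (hη0_range : ∀ x, η0 x ∈ Icc (0 : ℝ) 1)
    (hη_range : ∀ i x, η i x ∈ Icc (0 : ℝ) 1)
    (hsupp0 : Function.support η0 ⊆ Ω)
    (hsupp : ∀ i, Function.support (η i) ⊆ V i)
    (hsum1 : ∀ x ∈ Ω, η0 x + ∑ i, η i x = 1)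
    (hsum_le : ∀ x, η0 x + ∑ i, η i x ≤ 1) :
    (∀ x ∈ Ω, η0 x * u x + ∑ i, η i x * f i x = u x) ∧
    sSup ((fun x => |η0 x * u x + ∑ i, η i x * f i x|) '' univ) =
      sSup ((fun x => |u x|) '' Ω) := by
  have hEu : ∀ x ∈ Ω, η0 x * u x + ∑ i, η i x * f i x = u x := by
    intro x hx
    have h1 : ∀ i, η i x * f i x = η i x * u x := by
      intro i
      by_cases h : η i x = 0
      · simp [h]
      · rw [hf_eq i x ⟨hsupp i h, hx⟩]
    calc η0 x * u x + ∑ i, η i x * f i x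
        = η0 x * u x + ∑ i, η i x * u x := by
          rw [Finset.sum_congr rfl fun i _ => h1 i]
      _ = (η0 x + ∑ i, η i x) * u x := by rw [add_mul, Finset.sum_mul]
      _ = u x := by rw [hsum1 x hx, one_mul]
  refine ⟨hEu, ?_⟩
  set S := sSup ((fun x => |u x|) '' Ω) with hS
  have hbdd : BddAbove ((fun x => |u x|) '' Ω) :=
    ⟨K, by rintro _ ⟨x, hx, rfl⟩; exact hu x hx⟩
  obtain ⟨x₀, hx₀⟩ := hΩ
  have hS0 : 0 ≤ S := le_trans (abs_nonneg _) (le_csSup hbdd ⟨x₀, hx₀, rfl⟩)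
  have hfS : ∀ i x, x ∈ V i → |f i x| ≤ S := by
    intro i x hxV
    obtain ⟨Ki, hKi⟩ := hf_bdd i
    have h1 : |f i x| ≤ sSup ((fun x => |f i x|) '' V i) :=
      le_csSup ⟨Ki, by rintro _ ⟨y, hy, rfl⟩; exact hKi y hy⟩ ⟨x, hxV, rfl⟩
    rw [hf_sup i] at h1
    rcases (V i ∩ Ω).eq_empty_or_nonempty with he | hne
    · rw [he, image_empty, Real.sSup_empty] at h1
      exact h1.trans hS0
    · exact h1.trans (csSup_le_csSup hbdd (hne.image _)
        (image_mono inter_subset_right))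
  have hEuS : ∀ x, |η0 x * u x + ∑ i, η i x * f i x| ≤ S := by
    intro x
    have h0 : |η0 x * u x| ≤ η0 x * S := by
      by_cases h : η0 x = 0
      · simp [h]
      · rw [abs_mul, abs_of_nonneg (hη0_range x).1]
        exact mul_le_mul_of_nonneg_left (le_csSup hbdd ⟨x, hsupp0 h, rfl⟩)
          (hη0_range x).1
    have hi : ∀ i, |η i x * f i x| ≤ η i x * S := by
      intro i
      by_cases h : η i x = 0
      · simp [h]
      · rw [abs_mul, abs_of_nonneg (hη_range i x).1]
        exact mul_le_mul_of_nonneg_left (hfS i x (hsupp i h)) (hη_range i x).1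
    calc |η0 x * u x + ∑ i, η i x * f i x|
        ≤ |η0 x * u x| + |∑ i, η i x * f i x| := abs_add_le _ _
      _ ≤ η0 x * S + ∑ i, η i x * S :=
          add_le_add h0 ((Finset.abs_sum_le_sum_abs _ _).trans
            (Finset.sum_le_sum fun i _ => hi i))
      _ = (η0 x + ∑ i, η i x) * S := by rw [add_mul, Finset.sum_mul]
      _ ≤ 1 * S := mul_le_mul_of_nonneg_right (hsum_le x) hS0
      _ = S := one_mul S
  apply le_antisymm
  · exact csSup_le ⟨_, mem_image_of_mem _ (mem_univ x₀)⟩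
      (by rintro _ ⟨x, -, rfl⟩; exact hEuS x)
  · have hb : BddAbove ((fun x => |η0 x * u x + ∑ i, η i x * f i x|) '' univ) :=
      ⟨S, by rintro _ ⟨x, -, rfl⟩; exact hEuS x⟩
    refine csSup_le_csSup hb ⟨_, ⟨x₀, hx₀, rfl⟩⟩ ?_
    rintro _ ⟨x, hx, rfl⟩
    exact ⟨x, mem_univ x, by dsimp only; rw [hEu x hx]⟩
end
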